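/- Let n > 3, let G be a group, and let r_2, …, r_n ∈ G satisfy the relations (R1)–(R6). Define s_{i-1} = r_i r_2 r_i for all i ∈ [2,n], and assume the elements s_1, …, s_{n-1} satisfy the type A Coxeter relations. Then for every k ∈ [2,n-2], r_{k+2} r_k = (s_1 s_2 ⋯ s_k s_{k+1})(s_1 s_2 ⋯ s_{k-1} s_k). -/
import Mathlib


/-- The word `s₁ (s₂ s₁) (s₃ s₂ s₁) ⋯ (s_{k-1} s_{k-2} ⋯ s₂ s₁)` in a group. -/
def rwordA {G : Type*} [Group G] (s : ℕ → G) (k : ℕ) : G :=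
  ((List.range (k - 1)).map (fun j => ((List.range (j + 1)).map (fun i => s (j + 1 - i))).prod)).prod

/-- The ascending word `s₁ s₂ ⋯ s_k` in a group. -/
def ascProd {G : Type*} [Group G] (s : ℕ → G) (k : ℕ) : G :=
  ((List.range k).map (fun i => s (i + 1))).prod

private lemma ascProd_succ {G : Type*} [Group G] (s : ℕ → G) (k : ℕ) :
    ascProd s (k + 1) = ascProd s k * s (k + 1) := by
  simp [ascProd, List.range_succ]

private lemma helper1 {G : Type*} [Group G] (a b : G) (ha : a * a = 1) (hb : b * b = 1)
    (hab : (a * b) ^ 3 = 1) : b * a = a * (b * a * b) := by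
  have ha' : a⁻¹ = a := inv_eq_of_mul_eq_one_right ha
  have hb' : b⁻¹ = b := inv_eq_of_mul_eq_one_right hb
  have h : (a * b) * (a * b) * (a * b) = 1 := by
    simpa [pow_succ, pow_zero] using hab
  have h2 : (a * b) * (a * b) = (a * b)⁻¹ := eq_inv_of_mul_eq_one_left h
  rw [mul_inv_rev, ha', hb'] at h2
  calc b * a = a * b * (a * b) := h2.symm
  _ = a * (b * a * b) := by group

private lemma helper2 {G : Type*} [Group G] (a b c d : G) (ha : a * a = 1) (hc : c * c = 1)
    (h : a * b * c * d * c * a * c = 1) : a * b * (c * d * c) = c * a := by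
  have ha' : a⁻¹ = a := inv_eq_of_mul_eq_one_right ha
  have hc' : c⁻¹ = c := inv_eq_of_mul_eq_one_right hc
  have h' : (a * b * c * d * c) * (a * c) = 1 := by
    calc (a * b * c * d * c) * (a * c) = a * b * c * d * c * a * c := by group
    _ = 1 := h
  have h2 : a * b * c * d * c = (a * c)⁻¹ := eq_inv_of_mul_eq_one_left h'
  rw [mul_inv_rev, ha', hc'] at h2
  calc a * b * (c * d * c) = a * b * c * d * c := by group
  _ = c * a := h2

theorem stmt5 (n : ℕ) (hn : 3 < n) (G : Type*) [Group G] (r s : ℕ → G)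
    (hR1 : ∀ k, 2 ≤ k → k ≤ n → r k * r k = 1)
    (hR2 : (r 2 * r 3) ^ 3 = 1)
    (hR3 : ∀ k, 4 ≤ k → k ≤ n → (r 2 * r k) ^ 4 = 1)
    (hR4 : ∀ l k, 4 ≤ l → l ≤ n → 3 ≤ k → k ≤ l - 1 →
      r l * r (l - k + 2) * r 2 * r (l - k + 2) * r l * r k * r 2 * r k = 1)
    (hR5 : ∀ k, 3 ≤ k → k ≤ n - 1 →
      r k * r (k - 1) * r (k + 1) * r 2 * r (k + 1) * r k * r (k + 1) = 1)
    (hR6 : ∀ k, 3 ≤ k → k ≤ n - 1 →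
      (r k * r (k - 1)) ^ 2 * r (k + 1) * r 3 * r (k + 1) * r (k - 1) * r (k + 1) = 1)
    (hs : ∀ i, 2 ≤ i → i ≤ n → s (i - 1) = r i * r 2 * r i)
    (hA1 : ∀ i, 1 ≤ i → i ≤ n - 1 → s i * s i = 1)
    (hA2 : ∀ i, 1 ≤ i → i ≤ n - 2 → (s i * s (i + 1)) ^ 3 = 1)
    (hA3 : ∀ i j, 1 ≤ i → i ≤ n - 3 → i + 2 ≤ j → j ≤ n - 1 → (s i * s j) ^ 2 = 1) :
    ∀ k, 2 ≤ k → k ≤ n - 2 → r (k + 2) * r k = ascProd s (k + 1) * ascProd s k := by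
  have key : ∀ m, 2 ≤ m → m ≤ n - 1 → r (m + 1) * r m = ascProd s m := by
    intro m hm
    induction m, hm using Nat.le_induction with
    | base =>
      intro _
      have h2 : r 2 * r 2 = 1 := hR1 2 (by omega) (by omega)
      have h3 : r 3 * r 3 = 1 := hR1 3 (by omega) (by omega)
      have hs1 : s 1 = r 2 * r 2 * r 2 := by
        have := hs 2 (by omega) (by omega); simpa using this
      have hs1' : s 1 = r 2 := by rw [hs1, h2, one_mul]
      have hs2 : s 2 = r 3 * r 2 * r 3 := by
        have := hs 3 (by omega) (by omega); simpa using this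
      have e2 : ascProd s 2 = s 1 * s 2 := by simp [ascProd, List.range_succ]
      rw [e2, hs1', hs2]
      have := helper1 (r 2) (r 3) h2 h3 hR2
      calc r 3 * r 2 = r 2 * (r 3 * r 2 * r 3) := this
      _ = r 2 * (r 3 * r 2 * r 3) := rfl
    | succ m hm ih =>
      intro hle
      have ihx := ih (by omega)
      have hsm : s (m + 1) = r (m + 2) * r 2 * r (m + 2) := by
        have := hs (m + 2) (by omega) (by omega)
        simpa using this
      have h5 := hR5 (m + 1) (by omega) (by omega)
      simp only [Nat.add_sub_cancel] at h5
      have ha : r (m + 1) * r (m + 1) = 1 := hR1 (m + 1) (by omega) (by omega)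
      have hc : r (m + 1 + 1) * r (m + 1 + 1) = 1 := hR1 (m + 1 + 1) (by omega) (by omega)
      have := helper2 (r (m + 1)) (r m) (r (m + 1 + 1)) (r 2) ha hc h5
      rw [ascProd_succ, ← ihx, hsm]
      calc r (m + 1 + 1) * r (m + 1)
          = r (m + 1) * r m * (r (m + 1 + 1) * r 2 * r (m + 1 + 1)) := by
            rw [this]
      _ = r (m + 1) * r m * (r (m + 2) * r 2 * r (m + 2)) := rfl
  intro k hk2 hkn
  have hk1 : r (k + 1) * r (k + 1) = 1 := hR1 (k + 1) (by omega) (by omega)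
  have e1 : r (k + 1 + 1) * r (k + 1) = ascProd s (k + 1) := key (k + 1) (by omega) (by omega)
  have e2 : r (k + 1) * r k = ascProd s k := key k (by omega) (by omega)
  calc r (k + 2) * r k = r (k + 2) * (r (k + 1) * r (k + 1)) * r k := by rw [hk1, mul_one]
  _ = (r (k + 1 + 1) * r (k + 1)) * (r (k + 1) * r k) := by group
  _ = ascProd s (k + 1) * ascProd s k := by rw [e1, e2]
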